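/- Fix t ∈ ℝ and a measurable set A ⊆ M, and assume zero mean drift: ∫_M d(X,t) dν(X) = 0. Since Z_M(0,t) = ν(M) ≠ 0 and k ↦ Z_M(k,t) is continuous, χ_k(A,t) is defined for all k in a neighborhood of 0, and as k → 0 one has the second-order Taylor expansion χ_k(A,t) = ν(A) + i⟨k, T(A,t)⟩ + ∑_{a,b=1}^n k_a k_b g_{ab}(A,t) + o(|k|²), where T(A,t) := ∫_A d(X,t) dν(X) and g_{ab}(A,t) := (1/2)[(ν(A)/ν(M)) ∫_M d_a(X,t) d_b(X,t) dν(X) − ∫_A d_a(X,t) d_b(X,t) dν(X)]. (This is the wave-number expansion Eq. (20) of the hydrodynamic measure, with the explicit coefficients given in the paper for systems with vanishing mean drift.) -/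

import Mathlib

open MeasureTheory Asymptotics Filter

lemma Zexpand {M : Type*} [MeasurableSpace M] (μ : Measure M) [IsFiniteMeasure μ]
    {n : ℕ} (f : M → Fin n → ℝ) (hf : Measurable f) (C : ℝ) (hC0 : 0 ≤ C)
    (hC : ∀ X a, |f X a| ≤ C) :
    (fun k : Fin n → ℝ =>
      (∫ X, Complex.exp (Complex.I * ((∑ a, k a * f X a : ℝ) : ℂ)) ∂μ) -
        (((μ Set.univ).toReal : ℂ)
          + Complex.I * ((∑ a, k a * ∫ X, f X a ∂μ : ℝ) : ℂ)
          - ((∑ a, ∑ b, k a * k b * ∫ X, f X a * f X b ∂μ : ℝ) : ℂ) / 2))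
      =O[nhds (0 : Fin n → ℝ)] (fun k => ‖k‖ ^ 3) := by
  have hfa : ∀ a, Measurable fun X => f X a := fun a => (measurable_pi_apply a).comp hf
  have hint1 : ∀ a, Integrable (fun X => f X a) μ := by
    intro a
    refine (integrable_const C).mono' (hfa a).aestronglyMeasurable ?_
    filter_upwards with X
    simpa [Real.norm_eq_abs] using hC X a
  have hint2 : ∀ a b, Integrable (fun X => f X a * f X b) μ := by
    intro a b
    refine (integrable_const (C * C)).mono' ((hfa a).mul (hfa b)).aestronglyMeasurable ?_
    filter_upwards with X
    rw [Real.norm_eq_abs, abs_mul]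
    exact mul_le_mul (hC X a) (hC X b) (abs_nonneg _) hC0
  set s : (Fin n → ℝ) → M → ℝ := fun k X => ∑ a, k a * f X a with hs
  have hsmeas : ∀ k, Measurable (s k) := fun k =>
    Finset.measurable_sum _ fun a _ => (hfa a).const_mul (k a)
  have hsbd : ∀ k X, |s k X| ≤ (n * C) * ‖k‖ := by
    intro k X
    calc |s k X| ≤ ∑ a, |k a * f X a| := Finset.abs_sum_le_sum_abs _ _
    _ ≤ ∑ _a : Fin n, ‖k‖ * C := by
        refine Finset.sum_le_sum fun a _ => ?_
        rw [abs_mul]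
        exact mul_le_mul (by simpa [Real.norm_eq_abs] using norm_le_pi_norm k a)
          (hC X a) (abs_nonneg _) (norm_nonneg _)
    _ = (n * C) * ‖k‖ := by simp [Finset.sum_const]; ring
  have hsint : ∀ k, Integrable (s k) μ :=
    fun k => integrable_finset_sum _ fun a _ => (hint1 a).const_mul (k a)
  have hs2eq : ∀ k X, s k X ^ 2 = ∑ a, ∑ b, (k a * k b) * (f X a * f X b) := by
    intro k X
    rw [sq, hs, Finset.sum_mul_sum]
    exact Finset.sum_congr rfl fun a _ => Finset.sum_congr rfl fun b _ => by ring
  have hs2int : ∀ k, Integrable (fun X => s k X ^ 2) μ := by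
    intro k
    simp only [hs2eq]
    exact integrable_finset_sum _ fun a _ =>
      integrable_finset_sum _ fun b _ => (hint2 a b).const_mul _
  have hsval : ∀ k, ∫ X, s k X ∂μ = ∑ a, k a * ∫ X, f X a ∂μ := by
    intro k
    rw [hs, integral_finset_sum _ fun a _ => (hint1 a).const_mul (k a)]
    exact Finset.sum_congr rfl fun a _ => integral_const_mul _ _
  have hs2val : ∀ k, ∫ X, s k X ^ 2 ∂μ
      = ∑ a, ∑ b, k a * k b * ∫ X, f X a * f X b ∂μ := by
    intro k
    simp only [hs2eq]
    rw [integral_finset_sum _ fun a _ => integrable_finset_sum _ fun b _ =>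
      (hint2 a b).const_mul _]
    refine Finset.sum_congr rfl fun a _ => ?_
    rw [integral_finset_sum _ fun b _ => (hint2 a b).const_mul _]
    exact Finset.sum_congr rfl fun b _ => integral_const_mul _ _
  have hexpint : ∀ k, Integrable (fun X =>
      Complex.exp (Complex.I * ((s k X : ℝ) : ℂ))) μ := by
    intro k
    refine (integrable_const (1 : ℝ)).mono'
      ((Complex.measurable_exp.comp
        (measurable_const.mul (Complex.measurable_ofReal.comp (hsmeas k)))).aestronglyMeasurable) ?_
    filter_upwards with X
    simp [Complex.norm_exp]
  have h2 : ∀ k, (fun X => (s k X : ℂ) ^ 2 / 2)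
      = fun X => ((2 : ℂ))⁻¹ * ((s k X ^ 2 : ℝ) : ℂ) := by
    intro k; funext X; push_cast; ring
  have hbint : ∀ k, Integrable (fun X => ((s k X : ℂ)) ^ 2 / 2) μ := by
    intro k; rw [h2 k]; exact ((hs2int k).ofReal.const_mul _)
  have haint : ∀ k, Integrable (fun X => (1 : ℂ) + Complex.I * (s k X : ℂ)) μ :=
    fun k => (integrable_const _).add ((hsint k).ofReal.const_mul _)
  have hpolyint : ∀ k, Integrable (fun X =>
      (1 : ℂ) + Complex.I * (s k X : ℂ) - (s k X : ℂ) ^ 2 / 2) μ :=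
    fun k => (haint k).sub (hbint k)
  have hpolyval : ∀ k, (∫ X, ((1 : ℂ) + Complex.I * (s k X : ℂ) - (s k X : ℂ) ^ 2 / 2) ∂μ)
      = (((μ Set.univ).toReal : ℂ)
          + Complex.I * ((∑ a, k a * ∫ X, f X a ∂μ : ℝ) : ℂ)
          - ((∑ a, ∑ b, k a * k b * ∫ X, f X a * f X b ∂μ : ℝ) : ℂ) / 2) := by
    intro k
    have hofReal : ∀ (u : M → ℝ), Integrable u μ →
        ∫ X, ((u X : ℝ) : ℂ) ∂μ = ((∫ X, u X ∂μ : ℝ) : ℂ) := fun u hu => by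
      simpa using Complex.ofRealCLM.integral_comp_comm hu
    have hof : Integrable (fun X => ((s k X : ℝ) : ℂ)) μ := (hsint k).ofReal
    have hof2 : Integrable (fun X => ((s k X ^ 2 : ℝ) : ℂ)) μ := (hs2int k).ofReal
    rw [integral_sub (haint k) (hbint k),
      integral_add (integrable_const (1 : ℂ)) (hof.const_mul Complex.I), h2 k,
      integral_const_mul, integral_const_mul,
      hofReal _ (hsint k), hofReal _ (hs2int k),
      integral_const, hsval, hs2val]
    push_cast [Complex.real_smul, measureReal_def]
    ring
  rw [isBigO_iff]
  refine ⟨(n * C) ^ 3 * (μ Set.univ).toReal, ?_⟩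
  have hball : ∀ᶠ k : Fin n → ℝ in nhds 0, ‖k‖ < (n * C + 1)⁻¹ := by
    have := Metric.ball_mem_nhds (0 : Fin n → ℝ) (by positivity : (0:ℝ) < (n * C + 1)⁻¹)
    filter_upwards [this] with k hk
    simpa [dist_zero_right] using hk
  filter_upwards [hball] with k hk
  have hs1 : ∀ X, |s k X| ≤ 1 := by
    intro X
    refine le_trans (hsbd k X) ?_
    have h1 : (n * C) * ‖k‖ ≤ (n * C) * (n * C + 1)⁻¹ :=
      mul_le_mul_of_nonneg_left hk.le (by positivity)
    refine le_trans h1 ?_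
    rw [← div_eq_mul_inv, div_le_one (by positivity)]
    linarith
  have hdiff : (∫ X, Complex.exp (Complex.I * ((s k X : ℝ) : ℂ)) ∂μ) -
      (((μ Set.univ).toReal : ℂ)
          + Complex.I * ((∑ a, k a * ∫ X, f X a ∂μ : ℝ) : ℂ)
          - ((∑ a, ∑ b, k a * k b * ∫ X, f X a * f X b ∂μ : ℝ) : ℂ) / 2)
      = ∫ X, (Complex.exp (Complex.I * ((s k X : ℝ) : ℂ))
          - ((1 : ℂ) + Complex.I * (s k X : ℂ) - (s k X : ℂ) ^ 2 / 2)) ∂μ := by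
    rw [integral_sub (hexpint k) (hpolyint k), hpolyval k]
  show ‖(∫ X, Complex.exp (Complex.I * ((s k X : ℝ) : ℂ)) ∂μ) - _‖ ≤ _
  rw [hdiff]
  have hptbd : ∀ X, ‖Complex.exp (Complex.I * ((s k X : ℝ) : ℂ))
      - ((1 : ℂ) + Complex.I * (s k X : ℂ) - (s k X : ℂ) ^ 2 / 2)‖
      ≤ ((n * C) * ‖k‖) ^ 3 := by
    intro X
    have hx : ‖Complex.I * ((s k X : ℝ) : ℂ)‖ ≤ 1 := by
      simpa [Complex.norm_real] using hs1 X
    have hb := Complex.exp_bound hx (n := 3) (by norm_num)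
    have hsum : (∑ m ∈ Finset.range 3, (Complex.I * ((s k X : ℝ) : ℂ)) ^ m / m.factorial)
        = (1 : ℂ) + Complex.I * (s k X : ℂ) - (s k X : ℂ) ^ 2 / 2 := by
      rw [Finset.sum_range_succ, Finset.sum_range_succ, Finset.sum_range_one]
      norm_num [mul_pow, Complex.I_sq]
      ring
    rw [hsum] at hb
    refine le_trans hb ?_
    have habs : ‖Complex.I * ((s k X : ℝ) : ℂ)‖ = |s k X| := by
      simp [Complex.norm_real]
    rw [habs]
    calc |s k X| ^ 3 * ((3+1 : ℕ) * ((Nat.factorial 3 : ℝ) * 3)⁻¹)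
        ≤ |s k X| ^ 3 * 1 := by
          refine mul_le_mul_of_nonneg_left ?_ (by positivity)
          norm_num [Nat.factorial]
      _ = |s k X| ^ 3 := mul_one _
      _ ≤ ((n * C) * ‖k‖) ^ 3 := pow_le_pow_left₀ (abs_nonneg _) (hsbd k X) 3
  calc ‖∫ X, (Complex.exp (Complex.I * ((s k X : ℝ) : ℂ))
          - ((1 : ℂ) + Complex.I * (s k X : ℂ) - (s k X : ℂ) ^ 2 / 2)) ∂μ‖
      ≤ ((n * C) * ‖k‖) ^ 3 * (μ Set.univ).toReal :=
        norm_integral_le_of_norm_le_const (Filter.Eventually.of_forall hptbd)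
    _ ≤ (n * C) ^ 3 * (μ Set.univ).toReal * ‖‖k‖ ^ 3‖ := by
        rw [Real.norm_eq_abs, abs_of_nonneg (by positivity : (0:ℝ) ≤ ‖k‖ ^ 3)]
        ring_nf
        exact le_refl _

section helpers

lemma linC {n : ℕ} (v : Fin n → ℝ) :
    (fun k : Fin n → ℝ => ((∑ a, k a * v a : ℝ) : ℂ)) =O[nhds 0] fun k => ‖k‖ := by
  rw [isBigO_iff]
  refine ⟨∑ a, |v a|, Filter.Eventually.of_forall fun k => ?_⟩
  rw [Complex.norm_real, Real.norm_eq_abs, Real.norm_eq_abs,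
    abs_of_nonneg (norm_nonneg k)]
  calc |∑ a, k a * v a| ≤ ∑ a, |k a * v a| := Finset.abs_sum_le_sum_abs _ _
    _ ≤ ∑ a, |v a| * ‖k‖ := by
        refine Finset.sum_le_sum fun a _ => ?_
        rw [abs_mul, mul_comm]
        exact mul_le_mul_of_nonneg_left
          (by simpa [Real.norm_eq_abs] using norm_le_pi_norm k a) (abs_nonneg _)
    _ = (∑ a, |v a|) * ‖k‖ := (Finset.sum_mul _ _ _).symm

lemma quadC {n : ℕ} (w : Fin n → Fin n → ℝ) :
    (fun k : Fin n → ℝ => ((∑ a, ∑ b, k a * k b * w a b : ℝ) : ℂ))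
      =O[nhds 0] fun k => ‖k‖ ^ 2 := by
  rw [isBigO_iff]
  refine ⟨∑ a, ∑ b, |w a b|, Filter.Eventually.of_forall fun k => ?_⟩
  rw [Complex.norm_real, Real.norm_eq_abs, Real.norm_eq_abs,
    abs_of_nonneg (by positivity : (0:ℝ) ≤ ‖k‖ ^ 2)]
  have hka : ∀ a, |k a| ≤ ‖k‖ := fun a => by
    simpa [Real.norm_eq_abs] using norm_le_pi_norm k a
  calc |∑ a, ∑ b, k a * k b * w a b| ≤ ∑ a, |∑ b, k a * k b * w a b| :=
        Finset.abs_sum_le_sum_abs _ _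
    _ ≤ ∑ a, ∑ b, |k a * k b * w a b| :=
        Finset.sum_le_sum fun a _ => Finset.abs_sum_le_sum_abs _ _
    _ ≤ ∑ a, ∑ b, |w a b| * ‖k‖ ^ 2 := by
        refine Finset.sum_le_sum fun a _ => Finset.sum_le_sum fun b _ => ?_
        rw [abs_mul, abs_mul]
        calc |k a| * |k b| * |w a b| ≤ ‖k‖ * ‖k‖ * |w a b| := by
              exact mul_le_mul_of_nonneg_right
                (mul_le_mul (hka a) (hka b) (abs_nonneg _) (norm_nonneg _)) (abs_nonneg _)
          _ = |w a b| * ‖k‖ ^ 2 := by ring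
    _ = (∑ a, ∑ b, |w a b|) * ‖k‖ ^ 2 := by
        simp [Finset.sum_mul]

end helpers


/-- `Z_A(k,t) = ∫_A exp(i⟨k, d(X,t)⟩) dν(X)`. -/
noncomputable def Zfun {M : Type*} [MeasurableSpace M] (ν : Measure M)
    {n : ℕ} (d : M → ℝ → Fin n → ℝ) (A : Set M) (k : Fin n → ℝ) (t : ℝ) : ℂ :=
  ∫ X in A, Complex.exp (Complex.I * ((∑ a, k a * d X t a : ℝ) : ℂ)) ∂ν

/-- The hydrodynamic measure `χ_k(A,t) = ν(M) ⬝ Z_A(k,t) / Z_M(k,t)`. -/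
noncomputable def hydroChi {M : Type*} [MeasurableSpace M] (ν : Measure M)
    {n : ℕ} (d : M → ℝ → Fin n → ℝ) (A : Set M) (k : Fin n → ℝ) (t : ℝ) : ℂ :=
  ((ν Set.univ).toReal : ℂ) * Zfun ν d A k t / Zfun ν d Set.univ k t

/-- second-order Taylor expansion of the hydrodynamic measure as
`k → 0`, for a system with zero mean drift:
`χ_k(A,t) = ν(A) + i⟨k, T(A,t)⟩ + ∑_{a,b} k_a k_b g_{ab}(A,t) + o(|k|²)`,
with `T(A,t) = ∫_A d dν` and
`g_{ab}(A,t) = ½[(ν(A)/ν(M)) ∫_M d_a d_b dν − ∫_A d_a d_b dν]`. -/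
theorem hydroChi_taylor_expansion {M : Type*} [MeasurableSpace M]
    (ν : Measure M) [IsFiniteMeasure ν] (hν : 0 < ν Set.univ)
    {n : ℕ} (hn : 1 ≤ n) (d : M → ℝ → Fin n → ℝ)
    (hdmeas : ∀ s : ℝ, Measurable fun X => d X s)
    (hdbd : ∀ s : ℝ, ∃ C : ℝ, ∀ X : M, ‖d X s‖ ≤ C)
    (t : ℝ) (A : Set M) (hA : MeasurableSet A)
    (hdrift : (∫ X, d X t ∂ν) = 0)
    (T : Fin n → ℝ) (hT : T = ∫ X in A, d X t ∂ν)
    (g : Fin n → Fin n → ℝ)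
    (hg : ∀ a b, g a b = (1 / 2) *
      (((ν A).toReal / (ν Set.univ).toReal) * (∫ X, d X t a * d X t b ∂ν)
        - ∫ X in A, d X t a * d X t b ∂ν)) :
    (fun k : Fin n → ℝ =>
        hydroChi ν d A k t -
          (((ν A).toReal : ℂ)
            + Complex.I * ((∑ a, k a * T a : ℝ) : ℂ)
            + ((∑ a, ∑ b, k a * k b * g a b : ℝ) : ℂ)))
      =o[nhds (0 : Fin n → ℝ)] (fun k => ‖k‖ ^ 2) := by
  obtain ⟨C₀, hC₀⟩ := hdbd t
  set C := max C₀ 0 with hCdef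
  have hC0 : 0 ≤ C := le_max_right _ _
  have hC : ∀ X a, |d X t a| ≤ C := fun X a =>
    le_trans (le_trans (by simpa [Real.norm_eq_abs] using norm_le_pi_norm (d X t) a)
      (hC₀ X)) (le_max_left _ _)
  have hc : 0 < (ν Set.univ).toReal :=
    ENNReal.toReal_pos hν.ne' (measure_ne_top ν _)
  set c : ℝ := (ν Set.univ).toReal with hcdef
  have hcC : (c : ℂ) ≠ 0 := by exact_mod_cast hc.ne'
  set rA : ℝ := (ν A).toReal with hrAdef
  have hdint : Integrable (fun X => d X t) ν := by
    refine (integrable_const C₀).mono' (hdmeas t).aestronglyMeasurable ?_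
    filter_upwards with X using hC₀ X
  have hdintA : Integrable (fun X => d X t) (ν.restrict A) := hdint.restrict
  have hproj : ∀ (μ' : Measure M), Integrable (fun X => d X t) μ' →
      ∀ a, (∫ X, d X t ∂μ') a = ∫ X, d X t a ∂μ' := fun μ' hμ a => by
    simpa using
      ((ContinuousLinearMap.proj (R := ℝ) (φ := fun _ : Fin n => ℝ) a).integral_comp_comm hμ).symm
  have hTa : ∀ a, T a = ∫ X in A, d X t a ∂ν := by
    intro a
    rw [hT, hproj (ν.restrict A) hdintA a]
  have hdrifta : ∀ a, (∫ X, d X t a ∂ν) = 0 := by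
    intro a
    rw [← hproj ν hdint a, hdrift]
    rfl
  have hFA := Zexpand (ν.restrict A) (fun X => d X t) (hdmeas t) C hC0 hC
  have hGM := Zexpand ν (fun X => d X t) (hdmeas t) C hC0 hC
  simp only [Measure.restrict_apply_univ, ← hTa] at hFA
  simp only [hdrifta, mul_zero, Finset.sum_const_zero, Complex.ofReal_zero, add_zero] at hGM
  set F : (Fin n → ℝ) → ℂ := fun k => Zfun ν d A k t with hFdef
  set G : (Fin n → ℝ) → ℂ := fun k => Zfun ν d Set.univ k t with hGdef
  set L : (Fin n → ℝ) → ℝ := fun k => ∑ a, k a * T a with hLdef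
  set Qr : (Fin n → ℝ) → ℝ := fun k => ∑ a, ∑ b, k a * k b * g a b with hQdef
  set SAr : (Fin n → ℝ) → ℝ :=
    fun k => ∑ a, ∑ b, k a * k b * ∫ X in A, d X t a * d X t b ∂ν with hSAdef
  set SMr : (Fin n → ℝ) → ℝ :=
    fun k => ∑ a, ∑ b, k a * k b * ∫ X, d X t a * d X t b ∂ν with hSMdef
  set P : (Fin n → ℝ) → ℂ :=
    fun k => (rA : ℂ) + Complex.I * ((L k : ℝ) : ℂ) + ((Qr k : ℝ) : ℂ) with hPdef
  set PA : (Fin n → ℝ) → ℂ :=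
    fun k => (rA : ℂ) + Complex.I * ((L k : ℝ) : ℂ) - ((SAr k : ℝ) : ℂ) / 2 with hPAdef
  set PM : (Fin n → ℝ) → ℂ := fun k => (c : ℂ) - ((SMr k : ℝ) : ℂ) / 2 with hPMdef
  have hFA' : (fun k => F k - PA k) =O[nhds (0 : Fin n → ℝ)] fun k => ‖k‖ ^ 3 := hFA
  have hGM' : (fun k => G k - PM k) =O[nhds (0 : Fin n → ℝ)] fun k => ‖k‖ ^ 3 := by
    have he : ∀ k : Fin n → ℝ, G k
        = ∫ X, Complex.exp (Complex.I * ((∑ a, k a * d X t a : ℝ) : ℂ)) ∂ν := by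
      intro k
      show ∫ X in Set.univ, Complex.exp (Complex.I * ((∑ a, k a * d X t a : ℝ) : ℂ)) ∂ν = _
      exact setIntegral_univ
    simp only [he]
    exact hGM
  clear hFA hGM
  have hq : ∀ k, Qr k = (1 / 2) * ((rA / c) * SMr k - SAr k) := by
    intro k
    have h1 : ∀ a b : Fin n, k a * k b * g a b
        = (1 / 2) * (rA / c) * (k a * k b * ∫ X, d X t a * d X t b ∂ν)
          - (1 / 2) * (k a * k b * ∫ X in A, d X t a * d X t b ∂ν) := by
      intro a b; rw [hg]; ring
    rw [hQdef]
    simp only [h1, Finset.sum_sub_distrib, ← Finset.mul_sum]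
    rw [hSAdef, hSMdef]
    ring
  have halg : ∀ k, (c : ℂ) * PA k - P k * PM k
      = (Complex.I * ((L k : ℝ) : ℂ) + ((Qr k : ℝ) : ℂ)) * (((SMr k : ℝ) : ℂ) / 2) := by
    intro k
    have hq' : ((Qr k : ℝ) : ℂ) = (1 / 2) * (((rA : ℝ) : ℂ) / (c : ℂ) * ((SMr k : ℝ) : ℂ)
        - ((SAr k : ℝ) : ℂ)) := by
      rw [hq k]; push_cast; ring
    rw [hPAdef, hPdef, hPMdef]
    simp only
    rw [hq']
    field_simp
    ring
  have hNdecomp : ∀ k, (c : ℂ) * F k - P k * G k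
      = (c : ℂ) * (F k - PA k) - P k * (G k - PM k)
        + (Complex.I * ((L k : ℝ) : ℂ) + ((Qr k : ℝ) : ℂ)) * (((SMr k : ℝ) : ℂ) / 2) := by
    intro k
    linear_combination (halg k)
  have hcube : (fun k : Fin n → ℝ => ‖k‖ ^ 3) =o[nhds 0] fun k => ‖k‖ ^ 2 :=
    (isLittleO_pow_pow (by norm_num : 2 < 3)).comp_tendsto tendsto_norm_zero
  have hk21 : (fun k : Fin n → ℝ => ‖k‖ ^ 2) =O[nhds 0] fun k => ‖k‖ := by
    rw [isBigO_iff]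
    refine ⟨1, ?_⟩
    have hball : ∀ᶠ k : Fin n → ℝ in nhds 0, ‖k‖ < 1 := by
      filter_upwards [Metric.ball_mem_nhds (0 : Fin n → ℝ) one_pos] with k hk
      simpa [dist_zero_right] using hk
    filter_upwards [hball] with k hk
    rw [Real.norm_eq_abs, Real.norm_eq_abs, abs_of_nonneg (by positivity : (0:ℝ) ≤ ‖k‖ ^ 2),
      abs_of_nonneg (norm_nonneg k), one_mul, sq]
    nlinarith [norm_nonneg k]
  have hILQ : (fun k : Fin n → ℝ => Complex.I * ((L k : ℝ) : ℂ) + ((Qr k : ℝ) : ℂ))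
      =O[nhds 0] fun k => ‖k‖ :=
    ((linC T).const_mul_left Complex.I).add ((quadC g).trans hk21)
  have hSM2 : (fun k : Fin n → ℝ => ((SMr k : ℝ) : ℂ) / 2) =O[nhds 0] fun k => ‖k‖ ^ 2 := by
    have h2 : (fun k : Fin n → ℝ => ((SMr k : ℝ) : ℂ) / 2)
        = fun k => ((2 : ℂ))⁻¹ * ((SMr k : ℝ) : ℂ) := by funext k; ring
    rw [h2]
    exact (quadC (fun a b => ∫ X, d X t a * d X t b ∂ν)).const_mul_left _
  have hLcont : Continuous L := by
    rw [hLdef]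
    exact continuous_finset_sum _ fun a _ => (continuous_apply a).mul continuous_const
  have hQcont : Continuous Qr := by
    rw [hQdef]
    exact continuous_finset_sum _ fun a _ => continuous_finset_sum _ fun b _ =>
      ((continuous_apply a).mul (continuous_apply b)).mul continuous_const
  have hSMcont : Continuous SMr := by
    rw [hSMdef]
    exact continuous_finset_sum _ fun a _ => continuous_finset_sum _ fun b _ =>
      ((continuous_apply a).mul (continuous_apply b)).mul continuous_const
  have hPcont : Continuous P := by
    rw [hPdef]
    exact (continuous_const.add
      (continuous_const.mul (Complex.continuous_ofReal.comp hLcont))).add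
      (Complex.continuous_ofReal.comp hQcont)
  have hP1 : P =O[nhds (0 : Fin n → ℝ)] (fun _ => (1 : ℝ)) :=
    (hPcont.tendsto 0).isBigO_one ℝ
  have hN : (fun k => (c : ℂ) * F k - P k * G k) =o[nhds (0 : Fin n → ℝ)]
      fun k => ‖k‖ ^ 2 := by
    have h1 : (fun k => (c : ℂ) * (F k - PA k)) =O[nhds (0 : Fin n → ℝ)]
        (fun k => ‖k‖ ^ 3) := hFA'.const_mul_left _
    have h2 : (fun k => P k * (G k - PM k)) =O[nhds (0 : Fin n → ℝ)]
        (fun k => ‖k‖ ^ 3) := by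
      have h := hP1.mul hGM'
      have he : (fun k : Fin n → ℝ => (1 : ℝ) * ‖k‖ ^ 3) = fun k => ‖k‖ ^ 3 := by
        funext k; ring
      rwa [he] at h
    have h3 : (fun k => (Complex.I * ((L k : ℝ) : ℂ) + ((Qr k : ℝ) : ℂ))
        * (((SMr k : ℝ) : ℂ) / 2)) =O[nhds (0 : Fin n → ℝ)] (fun k => ‖k‖ ^ 3) := by
      have h := hILQ.mul hSM2
      have he : (fun k : Fin n → ℝ => ‖k‖ * ‖k‖ ^ 2) = fun k => ‖k‖ ^ 3 := by
        funext k; ring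
      rwa [he] at h
    have h := ((h1.sub h2).add h3).trans_isLittleO hcube
    have he : (fun k => (c : ℂ) * (F k - PA k) - P k * (G k - PM k)
        + (Complex.I * ((L k : ℝ) : ℂ) + ((Qr k : ℝ) : ℂ)) * (((SMr k : ℝ) : ℂ) / 2))
        = fun k => (c : ℂ) * F k - P k * G k := by
      funext k; exact (hNdecomp k).symm
    rwa [he] at h
  have hGtend : Tendsto G (nhds (0 : Fin n → ℝ)) (nhds (c : ℂ)) := by
    have h0 : Tendsto (fun k : Fin n → ℝ => ‖k‖ ^ 3) (nhds 0) (nhds 0) := by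
      simpa using (tendsto_norm_zero (E := Fin n → ℝ)).pow 3
    have h1 : Tendsto (fun k => G k - PM k) (nhds (0 : Fin n → ℝ)) (nhds 0) :=
      hGM'.trans_tendsto h0
    have hPMcont : Continuous PM := by
      rw [hPMdef]
      exact continuous_const.sub ((Complex.continuous_ofReal.comp hSMcont).div_const 2)
    have h2 : Tendsto PM (nhds (0 : Fin n → ℝ)) (nhds (c : ℂ)) := by
      have h := hPMcont.tendsto 0
      have hPM0 : PM 0 = (c : ℂ) := by
        rw [hPMdef]
        simp [hSMdef]
      rwa [hPM0] at h
    have h := h1.add h2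
    simpa using h
  have hGne : ∀ᶠ k in nhds (0 : Fin n → ℝ), G k ≠ 0 := hGtend.eventually_ne hcC
  have hGinv : (fun k => (G k)⁻¹) =O[nhds (0 : Fin n → ℝ)] (fun _ => (1 : ℝ)) :=
    (hGtend.inv₀ hcC).isBigO_one ℝ
  have heq : (fun k : Fin n → ℝ =>
      hydroChi ν d A k t - ((rA : ℂ) + Complex.I * ((∑ a, k a * T a : ℝ) : ℂ)
        + ((∑ a, ∑ b, k a * k b * g a b : ℝ) : ℂ)))
      =ᶠ[nhds (0 : Fin n → ℝ)] fun k => ((c : ℂ) * F k - P k * G k) * (G k)⁻¹ := by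
    filter_upwards [hGne] with k hk
    show (c : ℂ) * F k / G k - P k = ((c : ℂ) * F k - P k * G k) * (G k)⁻¹
    field_simp
  have hfinal := heq.trans_isLittleO (by
    have h := hN.mul_isBigO hGinv
    have he : (fun k : Fin n → ℝ => ‖k‖ ^ 2 * 1) = fun k => ‖k‖ ^ 2 := by
      funext k; ring
    rwa [he] at h)
  exact hfinal
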